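/- Let E be a rearrangement-invariant quasi-Banach function space on (0,∞) with functional ρ_E and lower Boyd index p_E. Let 0 < q_0 ≤ ∞ and 0 < p_0 < p_E. Then (L_{p_0,q_0}, L_∞)_{p_0,p_0;E} = E with equivalent quasi-norms: there exist constants c, C > 0 such that for every f ∈ L_{p_0,q_0} + L_∞, c ρ_E(f^*) ≤ ρ_E(t ↦ t^{-1/p_0} K(t^{1/p_0}, f; L_{p_0,q_0}, L_∞)) ≤ C ρ_E(f^*). -/

import Mathlib

open MeasureTheory Set Filter
open scoped ENNReal NNReal

noncomputable section

/-- The non-increasing rearrangement of a function on `(0, ∞)` (with Lebesgue measure):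
`f^*(t) = inf {λ : |{s > 0 : |f(s)| > λ}| ≤ t}`. -/
def rearr (f : ℝ → ℝ) (t : ℝ) : ℝ≥0∞ :=
  sInf {lam : ℝ≥0∞ |
    volume {s : ℝ | 0 < s ∧ lam < ENNReal.ofReal |f s|} ≤ ENNReal.ofReal t}

/-- The Lorentz quasi-norm `‖f‖_{p,q}` on `(0,∞)`, `0 < p < ∞`, `0 < q ≤ ∞`. -/
def lorentzNorm (p : ℝ) (q : ℝ≥0∞) (f : ℝ → ℝ) : ℝ≥0∞ :=
  if q = ⊤ then ⨆ t ∈ Set.Ioi (0 : ℝ), ENNReal.ofReal (t ^ (1 / p)) * rearr f t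
  else
    (∫⁻ t in Set.Ioi (0 : ℝ),
        (ENNReal.ofReal (t ^ (1 / p)) * rearr f t) ^ q.toReal / ENNReal.ofReal t) ^
      (1 / q.toReal)

/-- A rearrangement-invariant quasi-Banach function space on `(0,∞)`, given by the
functional `ρ` on (extended-)nonnegative measurable functions on `(0,∞)`. -/
structure RIQBFS where
  ρ : (ℝ → ℝ≥0∞) → ℝ≥0∞
  C : ℝ
  one_le_C : 1 ≤ C
  eq_zero_iff : ∀ f : ℝ → ℝ≥0∞, ρ f = 0 ↔ f =ᵐ[volume.restrict (Set.Ioi (0 : ℝ))] 0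
  smul_eq : ∀ (c : ℝ≥0) (f : ℝ → ℝ≥0∞), ρ (fun t => (c : ℝ≥0∞) * f t) = (c : ℝ≥0∞) * ρ f
  quasi_triangle : ∀ f g : ℝ → ℝ≥0∞, ρ (fun t => f t + g t) ≤ ENNReal.ofReal C * (ρ f + ρ g)
  mono : ∀ f g : ℝ → ℝ≥0∞,
    (∀ᵐ t ∂(volume.restrict (Set.Ioi (0 : ℝ))), g t ≤ f t) → ρ g ≤ ρ f
  fatou : ∀ (fn : ℕ → ℝ → ℝ≥0∞) (f : ℝ → ℝ≥0∞),
    (∀ n, ∀ᵐ t ∂(volume.restrict (Set.Ioi (0 : ℝ))), fn n t ≤ fn (n + 1) t) →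
    (∀ᵐ t ∂(volume.restrict (Set.Ioi (0 : ℝ))),
      Filter.Tendsto (fun n => fn n t) Filter.atTop (nhds (f t))) →
    Filter.Tendsto (fun n => ρ (fn n)) Filter.atTop (nhds (ρ f))
  indicator_finite : ∀ ω : Set ℝ, MeasurableSet ω → ω ⊆ Set.Ioi (0 : ℝ) → volume ω < ⊤ →
    ρ (Set.indicator ω fun _ => 1) < ⊤

/-- The quasi-norm of the space `E`: `‖f‖_E = ρ_E (f^*)`. -/
def RIQBFS.normE (E : RIQBFS) (f : ℝ → ℝ) : ℝ≥0∞ := E.ρ (rearr f)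

/-- The operator norm of the dilation operator `(D_a f)(t) = f (a t)` on `E`. -/
def dilNorm (E : RIQBFS) (a : ℝ) : ℝ≥0∞ :=
  ⨆ (f : ℝ → ℝ) (_ : Measurable f) (_ : E.normE f ≤ 1), E.normE fun t => f (a * t)

/-- The lower Boyd index
`p_E = sup {p > 0 : ∃ c > 0, ∀ 0 < a < 1, ‖D_a‖ ≤ c a^{-1/p}}` (an element of `(0, ∞]`). -/
def lowerBoyd (E : RIQBFS) : ℝ≥0∞ :=
  sSup (ENNReal.ofReal ''
    {p : ℝ | 0 < p ∧ ∃ c : ℝ, 0 < c ∧ ∀ a : ℝ, 0 < a → a < 1 →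
      dilNorm E a ≤ ENNReal.ofReal (c * a ^ (-(1 / p)))})

/-- The upper Boyd index
`q_E = inf {q > 0 : ∃ c > 0, ∀ a ≥ 1, ‖D_a‖ ≤ c a^{-1/q}}` (an element of `(0, ∞]`,
with `inf ∅ = ∞`). -/
def upperBoyd (E : RIQBFS) : ℝ≥0∞ :=
  sInf (ENNReal.ofReal ''
    {q : ℝ | 0 < q ∧ ∃ c : ℝ, 0 < c ∧ ∀ a : ℝ, 1 ≤ a →
      dilNorm E a ≤ ENNReal.ofReal (c * a ^ (-(1 / q)))})

/-- The Peetre K-functional for the couple `(L_{p₀,q₀}, L_∞)` on `(0,∞)`. -/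
def lorentzKinf (p0 : ℝ) (q0 : ℝ≥0∞) (t : ℝ) (f : ℝ → ℝ) : ℝ≥0∞ :=
  ⨅ (g : (ℝ → ℝ) × (ℝ → ℝ)) (_ : g.1 + g.2 = f ∧ Measurable g.1 ∧ Measurable g.2),
    lorentzNorm p0 q0 g.1 +
      ENNReal.ofReal t * eLpNorm g.2 ⊤ (volume.restrict (Set.Ioi (0 : ℝ)))

/-- The distribution function. -/
def distf (f : ℝ → ℝ) (lam : ℝ≥0∞) : ℝ≥0∞ :=
  volume {s : ℝ | 0 < s ∧ lam < ENNReal.ofReal |f s|}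

lemma rearr_eq_sInf (f : ℝ → ℝ) (t : ℝ) :
    rearr f t = sInf {lam : ℝ≥0∞ | distf f lam ≤ ENNReal.ofReal t} := rfl

lemma distf_anti (f : ℝ → ℝ) {lam lam' : ℝ≥0∞} (h : lam ≤ lam') :
    distf f lam' ≤ distf f lam := by
  apply measure_mono
  rintro s ⟨hs, hl⟩
  exact ⟨hs, lt_of_le_of_lt h hl⟩

lemma rearr_le {f : ℝ → ℝ} {t : ℝ} {lam : ℝ≥0∞}
    (h : distf f lam ≤ ENNReal.ofReal t) : rearr f t ≤ lam := sInf_le h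

lemma rearr_anti (f : ℝ → ℝ) {t t' : ℝ} (h : t ≤ t') : rearr f t' ≤ rearr f t := by
  apply sInf_le_sInf
  intro lam hl
  exact le_trans hl (ENNReal.ofReal_le_ofReal h)

lemma rearr_mono {f g : ℝ → ℝ} (h : ∀ s, 0 < s → |g s| ≤ |f s|) (t : ℝ) :
    rearr g t ≤ rearr f t := by
  apply sInf_le_sInf
  intro lam hl
  refine le_trans (measure_mono ?_) hl
  rintro s ⟨hs, hls⟩
  exact ⟨hs, lt_of_lt_of_le hls (ENNReal.ofReal_le_ofReal (h s hs))⟩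

lemma distf_lt {f : ℝ → ℝ} {t : ℝ} {lam : ℝ≥0∞} (h : rearr f t < lam) :
    distf f lam ≤ ENNReal.ofReal t := by
  obtain ⟨lam', hmem, hlt⟩ := sInf_lt_iff.mp h
  exact le_trans (distf_anti f hlt.le) hmem

lemma distf_rearr {f : ℝ → ℝ} (hf : Measurable f) {t : ℝ} (h : rearr f t ≠ ⊤) :
    distf f (rearr f t) ≤ ENNReal.ofReal t := by
  set r := rearr f t with hr
  have hset : {s : ℝ | 0 < s ∧ r < ENNReal.ofReal |f s|} =
      ⋃ n : ℕ, {s : ℝ | 0 < s ∧ r + (n : ℝ≥0∞)⁻¹ < ENNReal.ofReal |f s|} := by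
    ext s
    simp only [Set.mem_setOf_eq, Set.mem_iUnion]
    constructor
    · rintro ⟨hs, hlt⟩
      have hd : (ENNReal.ofReal |f s| - r) ≠ 0 := by
        simp only [ne_eq, tsub_eq_zero_iff_le, not_le]; exact hlt
      obtain ⟨n, hn⟩ := ENNReal.exists_inv_nat_lt hd
      refine ⟨n, hs, ?_⟩
      calc r + (n : ℝ≥0∞)⁻¹ < r + (ENNReal.ofReal |f s| - r) :=
            ENNReal.add_lt_add_left h hn
        _ = ENNReal.ofReal |f s| := add_tsub_cancel_of_le hlt.le
    · rintro ⟨n, hs, hlt⟩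
      exact ⟨hs, lt_of_le_of_lt (le_add_right le_rfl) hlt⟩
  have hmono : Monotone fun n : ℕ =>
      {s : ℝ | 0 < s ∧ r + (n : ℝ≥0∞)⁻¹ < ENNReal.ofReal |f s|} := by
    intro n m hnm
    rintro s ⟨hs, hlt⟩
    refine ⟨hs, lt_of_le_of_lt ?_ hlt⟩
    exact add_le_add_right (ENNReal.inv_le_inv.mpr (by exact_mod_cast hnm)) r
  rw [distf, hset, hmono.directed_le.measure_iUnion]
  refine iSup_le fun n => ?_
  rcases Nat.eq_zero_or_pos n with hn | hn
  · subst hn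
    refine le_trans (le_of_eq ?_) (zero_le : (0:ℝ≥0∞) ≤ _)
    convert measure_empty
    · ext s; simp
    · infer_instance
  · apply distf_lt
    exact ENNReal.lt_add_right h (by simp [hn.ne'])
lemma rearr_le_add {f g h : ℝ → ℝ} (hfgh : ∀ s, f s = g s + h s) (t : ℝ) :
    rearr f t ≤ rearr g t + eLpNorm h ⊤ (volume.restrict (Set.Ioi (0:ℝ))) := by
  set M := eLpNorm h ⊤ (volume.restrict (Set.Ioi (0:ℝ))) with hM
  rcases eq_or_ne M ⊤ with hMt | hMt
  · rw [hMt, add_top]; exact le_top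
  -- a.e. bound on h
  have hae : ∀ᵐ s ∂(volume.restrict (Set.Ioi (0:ℝ))), ENNReal.ofReal |h s| ≤ M := by
    have := MeasureTheory.ae_le_eLpNormEssSup (f := h) (μ := volume.restrict (Set.Ioi (0:ℝ)))
    rw [hM, MeasureTheory.eLpNorm_exponent_top]
    filter_upwards [this] with s hs
    rwa [← Real.enorm_eq_ofReal_abs]
  have key : ∀ lam ∈ {lam : ℝ≥0∞ | distf g lam ≤ ENNReal.ofReal t},
      rearr f t ≤ lam + M := by
    intro lam hlam
    apply rearr_le
    refine le_trans (measure_mono_ae ?_) hlam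
    have hae' : ∀ᵐ s ∂(volume : Measure ℝ), s ∈ Set.Ioi (0:ℝ) → ENNReal.ofReal |h s| ≤ M :=
      (ae_restrict_iff' measurableSet_Ioi).mp hae
    filter_upwards [hae'] with s hs
    rintro ⟨hs0, hlt⟩
    refine ⟨hs0, ?_⟩
    by_contra hle
    push_neg at hle
    have h1 : ENNReal.ofReal |f s| ≤ ENNReal.ofReal |g s| + ENNReal.ofReal |h s| := by
      rw [← ENNReal.ofReal_add (abs_nonneg _) (abs_nonneg _)]
      exact ENNReal.ofReal_le_ofReal (by rw [hfgh s]; exact abs_add_le _ _)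
    have h2 : ENNReal.ofReal |f s| ≤ lam + M :=
      le_trans h1 (add_le_add hle (hs hs0))
    exact absurd (lt_of_lt_of_le hlt h2) (lt_irrefl _)
  -- rearr f t ≤ sInf + M
  have h3 : rearr f t ≤ ⨅ lam : {lam : ℝ≥0∞ | distf g lam ≤ ENNReal.ofReal t}, (lam : ℝ≥0∞) + M :=
    le_iInf fun lam => key lam lam.2
  rw [rearr_eq_sInf (f := g), sInf_eq_iInf', ENNReal.iInf_add]
  exact h3

lemma rearr_smul_le {f : ℝ → ℝ} {r : ℝ} (hr : 0 < r) (t : ℝ) :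
    rearr (fun s => r * f s) t ≤ ENNReal.ofReal r * rearr f t := by
  have hR0 : ENNReal.ofReal r ≠ 0 := by simp [hr]
  have hRt : ENNReal.ofReal r ≠ ⊤ := ENNReal.ofReal_ne_top
  have hsets : ∀ lam : ℝ≥0∞, distf (fun s => r * f s) (ENNReal.ofReal r * lam) = distf f lam := by
    intro lam
    unfold distf
    congr 1
    ext s
    simp only [Set.mem_setOf_eq, and_congr_right_iff]
    intro _
    rw [abs_mul, abs_of_pos hr, ENNReal.ofReal_mul hr.le]
    exact ENNReal.mul_lt_mul_iff_right hR0 hRt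
  rw [mul_comm, rearr_eq_sInf (f := f), ← ENNReal.div_le_iff_le_mul (Or.inl hR0) (Or.inl hRt)]
  apply le_sInf
  intro lam hlam
  rw [ENNReal.div_le_iff_le_mul (Or.inl hR0) (Or.inl hRt), mul_comm]
  apply rearr_le
  rw [hsets lam]
  exact hlam

lemma rearr_smul {f : ℝ → ℝ} {r : ℝ} (hr : 0 < r) (t : ℝ) :
    rearr (fun s => r * f s) t = ENNReal.ofReal r * rearr f t := by
  refine le_antisymm (rearr_smul_le hr t) ?_
  have h2 := rearr_smul_le (f := fun s => r * f s) (r := r⁻¹) (inv_pos.mpr hr) t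
  have hfe : (fun s => r⁻¹ * (r * f s)) = f := by
    funext s; field_simp
  rw [hfe] at h2
  calc ENNReal.ofReal r * rearr f t
      ≤ ENNReal.ofReal r * (ENNReal.ofReal r⁻¹ * rearr (fun s => r * f s) t) :=
        mul_le_mul_right h2 _
    _ = rearr (fun s => r * f s) t := by
        rw [← mul_assoc, ← ENNReal.ofReal_mul hr.le, mul_inv_cancel₀ hr.ne', ENNReal.ofReal_one,
          one_mul]

lemma rearr_dilation {f : ℝ → ℝ} (hf : Measurable f) {a : ℝ} (ha : 0 < a) (t : ℝ) :
    rearr (fun s => f (a * s)) t = rearr f (a * t) := by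
  have hAf : ∀ lam : ℝ≥0∞,
      distf (fun s => f (a * s)) lam = ENNReal.ofReal a⁻¹ * distf f lam := by
    intro lam
    have hpre : {s : ℝ | 0 < s ∧ lam < ENNReal.ofReal |f (a * s)|} =
        (fun s : ℝ => a * s) ⁻¹' {u : ℝ | 0 < u ∧ lam < ENNReal.ofReal |f u|} := by
      ext s
      simp only [Set.mem_setOf_eq, Set.mem_preimage]
      constructor
      · rintro ⟨hs, hl⟩; exact ⟨mul_pos ha hs, hl⟩
      · rintro ⟨hs, hl⟩
        refine ⟨?_, hl⟩
        nlinarith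
    have hmeas : MeasurableSet {u : ℝ | 0 < u ∧ lam < ENNReal.ofReal |f u|} := by
      have h1 : MeasurableSet {u : ℝ | 0 < u} := measurableSet_Ioi
      have h2 : Measurable fun u : ℝ => ENNReal.ofReal |f u| :=
        ENNReal.measurable_ofReal.comp hf.abs
      exact h1.inter (h2 measurableSet_Ioi)
    rw [distf, hpre, ← Measure.map_apply (measurable_const_mul a) hmeas,
      Real.map_volume_mul_left ha.ne', Measure.smul_apply, smul_eq_mul,
      abs_of_pos (inv_pos.mpr ha)]
    rfl
  have hset : {lam : ℝ≥0∞ | distf (fun s => f (a * s)) lam ≤ ENNReal.ofReal t} =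
      {lam : ℝ≥0∞ | distf f lam ≤ ENNReal.ofReal (a * t)} := by
    ext lam
    simp only [Set.mem_setOf_eq, hAf lam]
    have ha0 : ENNReal.ofReal a ≠ 0 := by simp [ha]
    have hat : ENNReal.ofReal a ≠ ⊤ := ENNReal.ofReal_ne_top
    rw [ENNReal.ofReal_inv_of_pos ha, ← ENNReal.div_eq_inv_mul,
      ENNReal.div_le_iff_le_mul (Or.inl ha0) (Or.inl hat), mul_comm,
      ← ENNReal.ofReal_mul ha.le]
  rw [rearr_eq_sInf, rearr_eq_sInf, hset]
/-- lower-bound constant for the Lorentz norm. -/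
def clow (p0 : ℝ) (q0 : ℝ≥0∞) : ℝ :=
  if q0 = ⊤ then 1 else (2:ℝ) ^ (-(1/p0)) * (1/2:ℝ) ^ (1/q0.toReal)

lemma clow_pos (p0 : ℝ) (q0 : ℝ≥0∞) : 0 < clow p0 q0 := by
  unfold clow
  split
  · norm_num
  · exact mul_pos (Real.rpow_pos_of_pos two_pos _) (Real.rpow_pos_of_pos one_half_pos _)

lemma clow_le_one {p0 : ℝ} (hp0 : 0 < p0) (q0 : ℝ≥0∞) : clow p0 q0 ≤ 1 := by
  unfold clow
  split
  · exact le_refl 1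
  · have h1 : (2:ℝ) ^ (-(1/p0)) ≤ 1 := by
      apply Real.rpow_le_one_of_one_le_of_nonpos one_le_two
      rw [neg_nonpos]
      positivity
    have h2 : (1/2:ℝ) ^ (1/q0.toReal) ≤ 1 := by
      apply Real.rpow_le_one (by norm_num) (by norm_num)
      positivity
    nlinarith [Real.rpow_pos_of_pos two_pos (-(1/p0)), Real.rpow_pos_of_pos one_half_pos (1/q0.toReal)]

lemma lorentz_lower {p0 : ℝ} {q0 : ℝ≥0∞} (hp0 : 0 < p0) (hq0 : 0 < q0) (g : ℝ → ℝ)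
    {s : ℝ} (hs : 0 < s) :
    ENNReal.ofReal (clow p0 q0) * (ENNReal.ofReal (s ^ (1/p0)) * rearr g s) ≤
      lorentzNorm p0 q0 g := by
  rcases eq_or_ne q0 ⊤ with hqt | hqt
  · subst hqt
    rw [lorentzNorm, if_pos rfl, clow, if_pos rfl, ENNReal.ofReal_one, one_mul]
    exact @le_iSup₂ ℝ≥0∞ ℝ (fun t => t ∈ Set.Ioi (0:ℝ)) _
      (fun t _ => ENNReal.ofReal (t ^ (1/p0)) * rearr g t) s (Set.mem_Ioi.mpr hs)
  · have hq : 0 < q0.toReal := ENNReal.toReal_pos hq0.ne' hqt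
    set q := q0.toReal with hqdef
    rw [lorentzNorm, if_neg hqt]
    set r := rearr g s with hrdef
    set A := ENNReal.ofReal ((s/2) ^ (1/p0)) with hAdef
    -- pointwise bound on Ioc (s/2) s
    set cst := (A * r) ^ q / ENNReal.ofReal s with hcst
    have hint : cst * ENNReal.ofReal (s/2) ≤
        ∫⁻ t in Set.Ioi (0:ℝ),
          (ENNReal.ofReal (t ^ (1 / p0)) * rearr g t) ^ q / ENNReal.ofReal t := by
      have hsub : Set.Ioc (s/2) s ⊆ Set.Ioi (0:ℝ) := fun x hx => lt_trans (by linarith) hx.1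
      refine le_trans ?_ (lintegral_mono_set hsub)
      have hb : ∀ x ∈ Set.Ioc (s/2) s,
          cst ≤ (ENNReal.ofReal (x ^ (1 / p0)) * rearr g x) ^ q / ENNReal.ofReal x := by
        intro x hx
        have hx0 : 0 < x := lt_trans (by linarith) hx.1
        apply ENNReal.div_le_div
        · apply ENNReal.rpow_le_rpow _ hq.le
          apply mul_le_mul'
          · exact ENNReal.ofReal_le_ofReal
              (Real.rpow_le_rpow (by linarith) hx.1.le (by positivity))
          · exact rearr_anti g hx.2
        · exact ENNReal.ofReal_le_ofReal hx.2
      calc cst * ENNReal.ofReal (s/2)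
          = cst * volume (Set.Ioc (s/2) s) := by
            rw [Real.volume_Ioc, show s - s/2 = s/2 from by ring]
        _ = ∫⁻ x in Set.Ioc (s/2) s, cst := (setLIntegral_const _ _).symm
        _ ≤ _ := setLIntegral_mono' measurableSet_Ioc hb
    -- take rpow (1/q)
    have hmain : (cst * ENNReal.ofReal (s/2)) ^ (1/q) =
        A * r * ENNReal.ofReal ((1/2:ℝ) ^ (1/q)) := by
      have h1 : cst * ENNReal.ofReal (s/2) = (A * r) ^ q * ENNReal.ofReal (1/2 : ℝ) := by
        have hs' : s ≠ 0 := hs.ne'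
        rw [hcst, div_eq_mul_inv, mul_assoc]
        congr 1
        rw [mul_comm, ← div_eq_mul_inv, ← ENNReal.ofReal_div_of_pos hs,
          show (s/2)/s = (1/2 : ℝ) from by rw [div_right_comm, div_self hs']]
      rw [h1, ENNReal.mul_rpow_of_nonneg _ _ (by positivity), ← ENNReal.rpow_mul,
        mul_one_div_cancel hq.ne', ENNReal.rpow_one,
        ENNReal.ofReal_rpow_of_nonneg (by norm_num) (by positivity)]
    have hLHS : ENNReal.ofReal (clow p0 q0) * (ENNReal.ofReal (s ^ (1/p0)) * r) =
        A * r * ENNReal.ofReal ((1/2:ℝ) ^ (1/q)) := by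
      rw [hAdef, ← mul_assoc, ← ENNReal.ofReal_mul (clow_pos p0 q0).le, mul_right_comm,
        ← ENNReal.ofReal_mul (by positivity)]
      congr 2
      rw [clow, if_neg hqt, ← hqdef,
        Real.div_rpow hs.le (by norm_num : (0:ℝ) ≤ 2),
        Real.rpow_neg (by norm_num : (0:ℝ) ≤ 2)]
      field_simp
    rw [hLHS, ← hmain]
    exact ENNReal.rpow_le_rpow hint (by positivity)

lemma kinf_lower {p0 : ℝ} {q0 : ℝ≥0∞} (hp0 : 0 < p0) (hq0 : 0 < q0) (f : ℝ → ℝ)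
    {τ : ℝ} (hτ : 0 < τ) :
    ENNReal.ofReal (clow p0 q0) * (ENNReal.ofReal τ * rearr f (τ ^ p0)) ≤
      lorentzKinf p0 q0 τ f := by
  refine le_iInf fun g => le_iInf fun hg => ?_
  obtain ⟨hsum, hm1, hm2⟩ := hg
  set M := eLpNorm g.2 ⊤ (volume.restrict (Set.Ioi (0:ℝ))) with hMdef
  set r1 := rearr g.1 (τ ^ p0) with hr1
  have hdecomp : ∀ s, f s = g.1 s + g.2 s := fun s => by rw [← hsum]; rfl
  have h1 : rearr f (τ ^ p0) ≤ r1 + M := rearr_le_add hdecomp _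
  have hτp : 0 < τ ^ p0 := Real.rpow_pos_of_pos hτ _
  have hpow : (τ ^ p0) ^ (1/p0) = τ := by
    rw [← Real.rpow_mul hτ.le, mul_one_div_cancel hp0.ne', Real.rpow_one]
  have h2 : ENNReal.ofReal (clow p0 q0) * (ENNReal.ofReal τ * r1) ≤
      lorentzNorm p0 q0 g.1 := by
    have := lorentz_lower hp0 hq0 g.1 hτp
    rwa [hpow] at this
  have hc1 : ENNReal.ofReal (clow p0 q0) ≤ 1 := by
    rw [← ENNReal.ofReal_one]
    exact ENNReal.ofReal_le_ofReal (clow_le_one hp0 q0)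
  calc ENNReal.ofReal (clow p0 q0) * (ENNReal.ofReal τ * rearr f (τ ^ p0))
      ≤ ENNReal.ofReal (clow p0 q0) * (ENNReal.ofReal τ * (r1 + M)) := by
        exact mul_le_mul_right (mul_le_mul_right h1 _) _
    _ = ENNReal.ofReal (clow p0 q0) * (ENNReal.ofReal τ * r1) +
        ENNReal.ofReal (clow p0 q0) * (ENNReal.ofReal τ * M) := by ring
    _ ≤ lorentzNorm p0 q0 g.1 + ENNReal.ofReal τ * M := by
        refine add_le_add h2 ?_
        calc ENNReal.ofReal (clow p0 q0) * (ENNReal.ofReal τ * M)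
            ≤ 1 * (ENNReal.ofReal τ * M) := mul_le_mul_left hc1 _
          _ = ENNReal.ofReal τ * M := one_mul _

lemma rearr_lt_top {p0 : ℝ} {q0 : ℝ≥0∞} (hp0 : 0 < p0) (hq0 : 0 < q0) {f : ℝ → ℝ}
    (hfin : lorentzKinf p0 q0 1 f < ⊤) {t : ℝ} (ht : 0 < t) : rearr f t < ⊤ := by
  obtain ⟨g, hg⟩ := iInf_lt_top.mp hfin
  obtain ⟨hprop, hlt⟩ := iInf_lt_top.mp hg
  obtain ⟨hsum, hm1, hm2⟩ := hprop
  have h1 : lorentzNorm p0 q0 g.1 < ⊤ := lt_of_le_of_lt le_self_add hlt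
  have hM : eLpNorm g.2 ⊤ (volume.restrict (Set.Ioi (0:ℝ))) < ⊤ := by
    refine lt_of_le_of_lt ?_ hlt
    rw [ENNReal.ofReal_one, one_mul]
    exact le_add_self
  have h2 := rearr_le_add (f := f) (g := g.1) (h := g.2) (fun s => by rw [← hsum]; rfl) t
  have h3 := lorentz_lower hp0 hq0 g.1 ht
  have hg1 : rearr g.1 t < ⊤ := by
    by_contra htop
    push_neg at htop
    rw [top_le_iff] at htop
    rw [htop] at h3
    have hc : ENNReal.ofReal (clow p0 q0) ≠ 0 := by simp [clow_pos p0 q0]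
    have hs : ENNReal.ofReal (t ^ (1/p0)) ≠ 0 := by
      simp [Real.rpow_pos_of_pos ht]
    rw [ENNReal.mul_top hs, ENNReal.mul_top hc, top_le_iff] at h3
    exact absurd (h3 ▸ h1) (by simp)
  exact lt_of_le_of_lt h2 (ENNReal.add_lt_top.mpr ⟨hg1, hM⟩)
/-- truncation of `f` at height `m`. -/
def gtr (f : ℝ → ℝ) (m : ℝ) : ℝ → ℝ :=
  fun s => if 0 ≤ f s then max (f s - m) 0 else -(max (-f s - m) 0)

lemma gtr_measurable {f : ℝ → ℝ} (hf : Measurable f) (m : ℝ) : Measurable (gtr f m) :=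
  Measurable.ite (measurableSet_le measurable_const hf)
    ((hf.sub measurable_const).max measurable_const)
    (((hf.neg.sub measurable_const).max measurable_const).neg)

lemma gtr_abs (f : ℝ → ℝ) (m : ℝ) (s : ℝ) : |gtr f m s| = max (|f s| - m) 0 := by
  unfold gtr
  split_ifs with h
  · rw [abs_of_nonneg (le_max_right _ _), abs_of_nonneg h]
  · push_neg at h
    rw [abs_neg, abs_of_nonneg (le_max_right _ _), abs_of_neg h]

lemma htr_abs (f : ℝ → ℝ) {m : ℝ} (hm : 0 ≤ m) (s : ℝ) : |f s - gtr f m s| ≤ m := by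
  unfold gtr
  rw [abs_le]
  split_ifs with h
  · rcases le_total (f s - m) 0 with h1 | h1
    · rw [max_eq_right h1]; constructor <;> linarith
    · rw [max_eq_left h1]; constructor <;> linarith
  · push_neg at h
    rcases le_total (-f s - m) 0 with h1 | h1
    · rw [max_eq_right h1]; constructor <;> linarith
    · rw [max_eq_left h1]; constructor <;> linarith

lemma ofReal_max_zero (a : ℝ) : ENNReal.ofReal (max a 0) = ENNReal.ofReal a := by
  rcases le_total a 0 with h | h
  · rw [max_eq_right h, ENNReal.ofReal_of_nonpos h, ENNReal.ofReal_zero]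
  · rw [max_eq_left h]

lemma gtr_distf (f : ℝ → ℝ) {m : ℝ} (hm : 0 ≤ m) (lam : ℝ≥0∞) :
    distf (gtr f m) lam = distf f (lam + ENNReal.ofReal m) := by
  unfold distf
  congr 1
  ext s
  simp only [Set.mem_setOf_eq, and_congr_right_iff]
  intro _
  rw [gtr_abs, ofReal_max_zero, ENNReal.ofReal_sub _ hm, lt_tsub_iff_right]

lemma gtr_rearr_le (f : ℝ → ℝ) {m : ℝ} (hm : 0 ≤ m) (t : ℝ) :
    rearr (gtr f m) t ≤ rearr f t := by
  apply rearr_mono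
  intro s _
  rw [gtr_abs]
  exact max_le (by linarith [abs_nonneg (f s)]) (abs_nonneg _)

lemma gtr_rearr_zero {f : ℝ → ℝ} (hf : Measurable f) {t : ℝ}
    (hft : rearr f t ≠ ⊤) {s : ℝ} (hs : t ≤ s) :
    rearr (gtr f (rearr f t).toReal) s = 0 := by
  have hm : 0 ≤ (rearr f t).toReal := ENNReal.toReal_nonneg
  have h0 : ENNReal.ofReal (rearr f t).toReal = rearr f t := ENNReal.ofReal_toReal hft
  refine le_antisymm ?_ zero_le
  apply rearr_le
  rw [gtr_distf f hm, zero_add, h0]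
  exact le_trans (distf_rearr hf hft) (ENNReal.ofReal_le_ofReal hs)

lemma kinf_upper {p0 : ℝ} {q0 : ℝ≥0∞} {f : ℝ → ℝ} (hf : Measurable f) {t : ℝ}
    (hft : rearr f t ≠ ⊤) (τ : ℝ) :
    lorentzKinf p0 q0 τ f ≤
      lorentzNorm p0 q0 (gtr f (rearr f t).toReal) +
        ENNReal.ofReal τ * rearr f t := by
  set m := (rearr f t).toReal with hmdef
  have hm : 0 ≤ m := ENNReal.toReal_nonneg
  set g1 := gtr f m with hg1
  set g2 := fun s => f s - g1 s with hg2
  have hpair : (g1, g2).1 + (g1, g2).2 = f := by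
    funext s
    show g1 s + g2 s = f s
    rw [hg2]
    ring
  have hK : lorentzKinf p0 q0 τ f ≤ lorentzNorm p0 q0 g1 +
      ENNReal.ofReal τ * eLpNorm g2 ⊤ (volume.restrict (Set.Ioi (0:ℝ))) :=
    iInf_le_of_le (g1, g2) (iInf_le_of_le
      ⟨hpair, gtr_measurable hf m, hf.sub (gtr_measurable hf m)⟩ le_rfl)
  refine le_trans hK (add_le_add_right ?_ _)
  have hb : eLpNorm g2 ⊤ (volume.restrict (Set.Ioi (0:ℝ))) ≤ ENNReal.ofReal m := by
    rw [MeasureTheory.eLpNorm_exponent_top]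
    apply MeasureTheory.eLpNormEssSup_le_of_ae_bound (C := m)
    apply ae_of_all
    intro s
    rw [Real.norm_eq_abs]
    exact htr_abs f hm s
  calc ENNReal.ofReal τ * eLpNorm g2 ⊤ (volume.restrict (Set.Ioi (0:ℝ)))
      ≤ ENNReal.ofReal τ * ENNReal.ofReal m := mul_le_mul_right hb _
    _ = ENNReal.ofReal τ * rearr f t := by rw [hmdef, ENNReal.ofReal_toReal hft]
lemma ofReal_rpow_cancel {t : ℝ} (ht : 0 < t) (r : ℝ) :
    ENNReal.ofReal (t ^ (-r)) * ENNReal.ofReal (t ^ r) = 1 := by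
  rw [← ENNReal.ofReal_mul (Real.rpow_nonneg ht.le _), ← Real.rpow_add ht, neg_add_cancel,
    Real.rpow_zero, ENNReal.ofReal_one]

lemma pow_rpow_comm {B : ℝ} (hB0 : 0 < B) (k : ℕ) (a : ℝ) :
    ((B ^ k : ℝ)) ^ a = (B ^ a) ^ k := by
  rw [← Real.rpow_natCast B k, ← Real.rpow_natCast (B ^ a) k,
    ← Real.rpow_mul hB0.le, ← Real.rpow_mul hB0.le, mul_comm]

lemma exists_pow_block {B t s : ℝ} (hB0 : 0 < B) (hB1 : B < 1) (ht : 0 < t)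
    (hs0 : 0 < s) (hst : s ≤ t) :
    ∃ k : ℕ, B ^ (k+1) * t < s ∧ s ≤ B ^ k * t := by
  have hex : ∃ n : ℕ, B ^ (n+1) * t < s := by
    obtain ⟨n, hn⟩ := exists_pow_lt_of_lt_one (div_pos hs0 ht) hB1
    have h1 : B ^ n * t < s := (lt_div_iff₀ ht).mp hn
    have h2 : B ^ (n+1) ≤ B ^ n := pow_le_pow_of_le_one hB0.le hB1.le (Nat.le_succ n)
    exact ⟨n, lt_of_le_of_lt (mul_le_mul_of_nonneg_right h2 ht.le) h1⟩
  classical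
  refine ⟨Nat.find hex, Nat.find_spec hex, ?_⟩
  rcases Nat.eq_zero_or_pos (Nat.find hex) with hk | hk
  · rw [hk, pow_zero, one_mul]; exact hst
  · obtain ⟨j, hj⟩ := Nat.exists_eq_succ_of_ne_zero hk.ne'
    have hnot := Nat.find_min hex (m := j) (by omega)
    push_neg at hnot
    rw [hj]
    exact hnot

lemma Ioc_subset_iUnion {B t : ℝ} (hB0 : 0 < B) (hB1 : B < 1) (ht : 0 < t) :
    Set.Ioc (0:ℝ) t ⊆ ⋃ k : ℕ, Set.Ioc (B ^ (k+1) * t) (B ^ k * t) := by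
  rintro x ⟨hx0, hxt⟩
  obtain ⟨k, h1, h2⟩ := exists_pow_block hB0 hB1 ht hx0 hxt
  exact Set.mem_iUnion.mpr ⟨k, h1, h2⟩

/-- constant in the truncation bound. -/
def kap (q0 : ℝ≥0∞) (B ε : ℝ) : ℝ≥0∞ :=
  if q0 = ⊤ then 1
  else (ENNReal.ofReal B⁻¹ * (1 - ENNReal.ofReal (B ^ (ε * q0.toReal)))⁻¹) ^ (1/q0.toReal)

lemma one_sub_ofReal_pos {B ε : ℝ} {q0 : ℝ≥0∞} (hq0 : 0 < q0) (hqt : q0 ≠ ⊤)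
    (hB0 : 0 < B) (hB1 : B < 1) (hε : 0 < ε) :
    (1 : ℝ≥0∞) - ENNReal.ofReal (B ^ (ε * q0.toReal)) ≠ 0 := by
  have hq : 0 < q0.toReal := ENNReal.toReal_pos hq0.ne' hqt
  rw [Ne, tsub_eq_zero_iff_le, not_le, ENNReal.ofReal_lt_one]
  exact Real.rpow_lt_one hB0.le hB1 (by positivity)

lemma kap_ne_top {q0 : ℝ≥0∞} {B ε : ℝ} (hq0 : 0 < q0) (hB0 : 0 < B) (hB1 : B < 1)
    (hε : 0 < ε) : kap q0 B ε ≠ ⊤ := by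
  unfold kap
  split
  · exact ENNReal.one_ne_top
  · rename_i hqt
    apply ENNReal.rpow_ne_top_of_nonneg (by positivity)
    apply ENNReal.mul_ne_top ENNReal.ofReal_ne_top
    rw [Ne, ENNReal.inv_eq_top]
    exact one_sub_ofReal_pos hq0 hqt hB0 hB1 hε

lemma trunc_bound {p0 ε : ℝ} {q0 : ℝ≥0∞} (hp0 : 0 < p0) (hq0 : 0 < q0)
    (hε : 0 < ε) (hεp : ε < 1/p0) {B : ℝ} (hB0 : 0 < B) (hB1 : B < 1)
    {t : ℝ} (ht : 0 < t) (f g : ℝ → ℝ)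
    (hg0 : ∀ s, t ≤ s → rearr g s = 0)
    (hgf : ∀ s : ℝ, rearr g s ≤ rearr f s) :
    ENNReal.ofReal (t ^ (-(1/p0))) * lorentzNorm p0 q0 g ≤
      kap q0 B ε * ∑' k : ℕ, ENNReal.ofReal ((B ^ k) ^ (1/p0 - ε)) * rearr f (B ^ (k+1) * t) := by
  set T := ∑' k : ℕ, ENNReal.ofReal ((B ^ k) ^ (1/p0 - ε)) * rearr f (B ^ (k+1) * t) with hT
  have hBk : ∀ k : ℕ, (0:ℝ) < B ^ k := fun k => pow_pos hB0 k
  have hBk1 : ∀ k : ℕ, (B:ℝ) ^ k ≤ 1 := fun k => pow_le_one₀ hB0.le hB1.le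
  have hexp : ∀ k : ℕ, ((B:ℝ) ^ k) ^ (1/p0) ≤ (B ^ k) ^ (1/p0 - ε) := fun k =>
    Real.rpow_le_rpow_of_exponent_ge (hBk k) (hBk1 k) (by linarith)
  rcases eq_or_ne q0 ⊤ with hqt | hqt
  · -- q0 = ⊤
    subst hqt
    rw [lorentzNorm, if_pos rfl, kap, if_pos rfl, one_mul]
    have hsup : (⨆ s ∈ Set.Ioi (0:ℝ), ENNReal.ofReal (s ^ (1 / p0)) * rearr g s) ≤
        ENNReal.ofReal (t ^ (1/p0)) * T := by
      refine iSup₂_le fun s hs => ?_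
      rcases le_or_gt t s with hts | hts
      · rw [hg0 s hts, mul_zero]; exact zero_le
      · obtain ⟨k, h1, h2⟩ := exists_pow_block hB0 hB1 ht hs hts.le
        calc ENNReal.ofReal (s ^ (1 / p0)) * rearr g s
            ≤ ENNReal.ofReal ((B ^ k * t) ^ (1 / p0)) * rearr f (B ^ (k+1) * t) := by
              apply mul_le_mul'
              · exact ENNReal.ofReal_le_ofReal
                  (Real.rpow_le_rpow (le_of_lt hs) h2 (by positivity))
              · exact le_trans (rearr_anti g h1.le) (hgf _)
          _ ≤ ENNReal.ofReal (t ^ (1/p0)) *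
              (ENNReal.ofReal ((B ^ k) ^ (1/p0 - ε)) * rearr f (B ^ (k+1) * t)) := by
              rw [Real.mul_rpow (hBk k).le ht.le, ENNReal.ofReal_mul
                  (Real.rpow_nonneg (hBk k).le _), mul_comm (ENNReal.ofReal ((B^k) ^ (1/p0))),
                mul_assoc]
              exact mul_le_mul_right (mul_le_mul_left
                (ENNReal.ofReal_le_ofReal (hexp k)) _) _
          _ ≤ ENNReal.ofReal (t ^ (1/p0)) * T :=
              mul_le_mul_right (ENNReal.le_tsum k) _
    calc ENNReal.ofReal (t ^ (-(1/p0))) * (⨆ s ∈ Set.Ioi (0:ℝ),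
            ENNReal.ofReal (s ^ (1 / p0)) * rearr g s)
        ≤ ENNReal.ofReal (t ^ (-(1/p0))) * (ENNReal.ofReal (t ^ (1/p0)) * T) :=
          mul_le_mul_right hsup _
      _ = T := by rw [← mul_assoc, ofReal_rpow_cancel ht, one_mul]
  · -- q0 < ∞
    have hq : 0 < q0.toReal := ENNReal.toReal_pos hq0.ne' hqt
    set q := q0.toReal with hqdef
    have hqq : q * (1/q) = 1 := mul_one_div_cancel hq.ne'
    rw [lorentzNorm, if_neg hqt]
    have hI : (∫⁻ s in Set.Ioi (0:ℝ),
          (ENNReal.ofReal (s ^ (1 / p0)) * rearr g s) ^ q / ENNReal.ofReal s) ≤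
        ENNReal.ofReal B⁻¹ *
          ∑' k : ℕ, (ENNReal.ofReal ((B ^ k * t) ^ (1/p0)) * rearr f (B ^ (k+1) * t)) ^ q := by
      have hsplit : (∫⁻ s in Set.Ioi (0:ℝ),
            (ENNReal.ofReal (s ^ (1 / p0)) * rearr g s) ^ q / ENNReal.ofReal s) ≤
          (∫⁻ s in Set.Ioc (0:ℝ) t,
            (ENNReal.ofReal (s ^ (1 / p0)) * rearr g s) ^ q / ENNReal.ofReal s) +
          ∫⁻ s in Set.Ioi t,
            (ENNReal.ofReal (s ^ (1 / p0)) * rearr g s) ^ q / ENNReal.ofReal s := by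
        rw [← Set.Ioc_union_Ioi_eq_Ioi ht.le]
        exact lintegral_union_le _ _ _
      have htail : (∫⁻ s in Set.Ioi t,
          (ENNReal.ofReal (s ^ (1 / p0)) * rearr g s) ^ q / ENNReal.ofReal s) = 0 := by
        have hzero : ∀ s ∈ Set.Ioi t,
            (ENNReal.ofReal (s ^ (1 / p0)) * rearr g s) ^ q / ENNReal.ofReal s = 0 := by
          intro s hs
          rw [hg0 s (le_of_lt hs), mul_zero, ENNReal.zero_rpow_of_pos hq, ENNReal.zero_div]
        refine le_antisymm ?_ zero_le
        calc (∫⁻ s in Set.Ioi t,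
              (ENNReal.ofReal (s ^ (1 / p0)) * rearr g s) ^ q / ENNReal.ofReal s)
            ≤ ∫⁻ _ in Set.Ioi t, 0 :=
              setLIntegral_mono' measurableSet_Ioi (fun x hx => le_of_eq (hzero x hx))
          _ = 0 := by simp
      have hmain : (∫⁻ s in Set.Ioc (0:ℝ) t,
          (ENNReal.ofReal (s ^ (1 / p0)) * rearr g s) ^ q / ENNReal.ofReal s) ≤
          ∑' k : ℕ, ENNReal.ofReal B⁻¹ *
            (ENNReal.ofReal ((B ^ k * t) ^ (1/p0)) * rearr f (B ^ (k+1) * t)) ^ q := by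
        refine le_trans (lintegral_mono_set (Ioc_subset_iUnion hB0 hB1 ht)) ?_
        refine le_trans (lintegral_iUnion_le _ _) (ENNReal.tsum_le_tsum fun k => ?_)
        have hJ : ∀ x ∈ Set.Ioc (B ^ (k+1) * t) (B ^ k * t),
            (ENNReal.ofReal (x ^ (1 / p0)) * rearr g x) ^ q / ENNReal.ofReal x ≤
              (ENNReal.ofReal ((B ^ k * t) ^ (1/p0)) * rearr f (B ^ (k+1) * t)) ^ q /
                ENNReal.ofReal (B ^ (k+1) * t) := by
          intro x hx
          have hx0 : 0 < x := lt_trans (by positivity) hx.1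
          apply ENNReal.div_le_div
          · apply ENNReal.rpow_le_rpow _ hq.le
            apply mul_le_mul'
            · exact ENNReal.ofReal_le_ofReal
                (Real.rpow_le_rpow hx0.le hx.2 (by positivity))
            · exact le_trans (rearr_anti g hx.1.le) (hgf _)
          · exact ENNReal.ofReal_le_ofReal hx.1.le
        calc (∫⁻ x in Set.Ioc (B ^ (k+1) * t) (B ^ k * t),
              (ENNReal.ofReal (x ^ (1 / p0)) * rearr g x) ^ q / ENNReal.ofReal x)
            ≤ ∫⁻ _ in Set.Ioc (B ^ (k+1) * t) (B ^ k * t),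
                (ENNReal.ofReal ((B ^ k * t) ^ (1/p0)) * rearr f (B ^ (k+1) * t)) ^ q /
                  ENNReal.ofReal (B ^ (k+1) * t) :=
              setLIntegral_mono' measurableSet_Ioc hJ
          _ = (ENNReal.ofReal ((B ^ k * t) ^ (1/p0)) * rearr f (B ^ (k+1) * t)) ^ q /
                ENNReal.ofReal (B ^ (k+1) * t) *
                volume (Set.Ioc (B ^ (k+1) * t) (B ^ k * t)) :=
              setLIntegral_const _ _
          _ ≤ (ENNReal.ofReal ((B ^ k * t) ^ (1/p0)) * rearr f (B ^ (k+1) * t)) ^ q /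
                ENNReal.ofReal (B ^ (k+1) * t) * ENNReal.ofReal (B ^ k * t) := by
              apply mul_le_mul_right
              rw [Real.volume_Ioc]
              exact ENNReal.ofReal_le_ofReal (by nlinarith [hBk (k+1)])
          _ = ENNReal.ofReal B⁻¹ *
                (ENNReal.ofReal ((B ^ k * t) ^ (1/p0)) * rearr f (B ^ (k+1) * t)) ^ q := by
              rw [div_eq_mul_inv, mul_assoc, mul_comm ((ENNReal.ofReal (B ^ (k+1) * t))⁻¹),
                ← div_eq_mul_inv, ← ENNReal.ofReal_div_of_pos (by positivity),
                show (B ^ k * t) / (B ^ (k+1) * t) = B⁻¹ from by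
                  rw [pow_succ]; field_simp,
                mul_comm]
      calc (∫⁻ s in Set.Ioi (0:ℝ),
            (ENNReal.ofReal (s ^ (1 / p0)) * rearr g s) ^ q / ENNReal.ofReal s)
          ≤ _ + _ := hsplit
        _ ≤ ∑' k : ℕ, ENNReal.ofReal B⁻¹ *
              (ENNReal.ofReal ((B ^ k * t) ^ (1/p0)) * rearr f (B ^ (k+1) * t)) ^ q := by
            rw [htail, add_zero]; exact hmain
        _ = ENNReal.ofReal B⁻¹ *
              ∑' k : ℕ, (ENNReal.ofReal ((B ^ k * t) ^ (1/p0)) * rearr f (B ^ (k+1) * t)) ^ q :=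
            ENNReal.tsum_mul_left
    -- step 2: rpow and pulling the scalar inside
    have h2 : ENNReal.ofReal (t ^ (-(1/p0))) * (∫⁻ s in Set.Ioi (0:ℝ),
          (ENNReal.ofReal (s ^ (1 / p0)) * rearr g s) ^ q / ENNReal.ofReal s) ^ (1/q) ≤
        (ENNReal.ofReal B⁻¹) ^ (1/q) *
          (∑' k : ℕ, (ENNReal.ofReal ((B ^ k) ^ (1/p0)) * rearr f (B ^ (k+1) * t)) ^ q) ^ (1/q)
        := by
      have hmono := ENNReal.rpow_le_rpow hI (by positivity : (0:ℝ) ≤ 1/q)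
      rw [ENNReal.mul_rpow_of_nonneg _ _ (by positivity : (0:ℝ) ≤ 1/q)] at hmono
      calc ENNReal.ofReal (t ^ (-(1/p0))) * (∫⁻ s in Set.Ioi (0:ℝ),
            (ENNReal.ofReal (s ^ (1 / p0)) * rearr g s) ^ q / ENNReal.ofReal s) ^ (1/q)
          ≤ ENNReal.ofReal (t ^ (-(1/p0))) * ((ENNReal.ofReal B⁻¹) ^ (1/q) *
              (∑' k : ℕ, (ENNReal.ofReal ((B ^ k * t) ^ (1/p0)) *
                rearr f (B ^ (k+1) * t)) ^ q) ^ (1/q)) :=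
            mul_le_mul_right hmono _
        _ = (ENNReal.ofReal B⁻¹) ^ (1/q) * (ENNReal.ofReal (t ^ (-(1/p0))) *
              (∑' k : ℕ, (ENNReal.ofReal ((B ^ k * t) ^ (1/p0)) *
                rearr f (B ^ (k+1) * t)) ^ q) ^ (1/q)) := by ring
        _ = (ENNReal.ofReal B⁻¹) ^ (1/q) *
              (∑' k : ℕ, (ENNReal.ofReal ((B ^ k) ^ (1/p0)) *
                rearr f (B ^ (k+1) * t)) ^ q) ^ (1/q) := by
            congr 1
            calc ENNReal.ofReal (t ^ (-(1/p0))) *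
                  (∑' k : ℕ, (ENNReal.ofReal ((B ^ k * t) ^ (1/p0)) *
                    rearr f (B ^ (k+1) * t)) ^ q) ^ (1/q)
                = ((ENNReal.ofReal (t ^ (-(1/p0)))) ^ q *
                    ∑' k : ℕ, (ENNReal.ofReal ((B ^ k * t) ^ (1/p0)) *
                      rearr f (B ^ (k+1) * t)) ^ q) ^ (1/q) := by
                  rw [ENNReal.mul_rpow_of_nonneg _ _ (by positivity : (0:ℝ) ≤ 1/q),
                    ← ENNReal.rpow_mul, hqq, ENNReal.rpow_one]
              _ = (∑' k : ℕ, (ENNReal.ofReal ((B ^ k) ^ (1/p0)) *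
                    rearr f (B ^ (k+1) * t)) ^ q) ^ (1/q) := by
                  congr 1
                  rw [← ENNReal.tsum_mul_left]
                  congr 1
                  funext k
                  rw [← ENNReal.mul_rpow_of_nonneg _ _ hq.le, ← mul_assoc,
                    ← ENNReal.ofReal_mul (Real.rpow_nonneg ht.le _),
                    show t ^ (-(1/p0)) * (B ^ k * t) ^ (1/p0) = (B ^ k : ℝ) ^ (1/p0) from by
                      rw [Real.mul_rpow (hBk k).le ht.le,
                        mul_comm ((B ^ k : ℝ) ^ (1/p0)), ← mul_assoc, ← Real.rpow_add ht,
                        neg_add_cancel, Real.rpow_zero, one_mul]]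
    -- step 3: ℓ^q into weighted ℓ^1
    have h3 : (∑' k : ℕ, (ENNReal.ofReal ((B ^ k) ^ (1/p0)) *
          rearr f (B ^ (k+1) * t)) ^ q) ^ (1/q) ≤
        ((1 - ENNReal.ofReal (B ^ (ε * q)))⁻¹) ^ (1/q) * T := by
      have hterm : ∀ k : ℕ, (ENNReal.ofReal ((B ^ k) ^ (1/p0)) *
          rearr f (B ^ (k+1) * t)) ^ q ≤
          (ENNReal.ofReal (B ^ (ε * q))) ^ k * T ^ q := by
        intro k
        have h1 : ENNReal.ofReal ((B ^ k) ^ (1/p0)) * rearr f (B ^ (k+1) * t) ≤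
            ENNReal.ofReal ((B ^ k) ^ ε) * T := by
          have hsplitexp : ((B:ℝ) ^ k) ^ (1/p0) = (B ^ k) ^ ε * (B ^ k) ^ (1/p0 - ε) := by
            rw [← Real.rpow_add (hBk k), add_sub_cancel]
          rw [hsplitexp, ENNReal.ofReal_mul (Real.rpow_nonneg (hBk k).le _), mul_assoc]
          exact mul_le_mul_right (ENNReal.le_tsum k) _
        calc (ENNReal.ofReal ((B ^ k) ^ (1/p0)) * rearr f (B ^ (k+1) * t)) ^ q
            ≤ (ENNReal.ofReal ((B ^ k) ^ ε) * T) ^ q := ENNReal.rpow_le_rpow h1 hq.le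
          _ = (ENNReal.ofReal (B ^ (ε * q))) ^ k * T ^ q := by
              rw [ENNReal.mul_rpow_of_nonneg _ _ hq.le]
              congr 1
              rw [ENNReal.ofReal_rpow_of_nonneg (Real.rpow_nonneg (hBk k).le _) hq.le,
                ← Real.rpow_mul (hBk k).le, pow_rpow_comm hB0 k (ε * q),
                ← ENNReal.ofReal_pow (Real.rpow_nonneg hB0.le _)]
      calc (∑' k : ℕ, (ENNReal.ofReal ((B ^ k) ^ (1/p0)) *
            rearr f (B ^ (k+1) * t)) ^ q) ^ (1/q)
          ≤ (∑' k : ℕ, (ENNReal.ofReal (B ^ (ε * q))) ^ k * T ^ q) ^ (1/q) :=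
            ENNReal.rpow_le_rpow (ENNReal.tsum_le_tsum hterm) (by positivity)
        _ = ((1 - ENNReal.ofReal (B ^ (ε * q)))⁻¹ * T ^ q) ^ (1/q) := by
            rw [ENNReal.tsum_mul_right, ENNReal.tsum_geometric]
        _ = ((1 - ENNReal.ofReal (B ^ (ε * q)))⁻¹) ^ (1/q) * T := by
            rw [ENNReal.mul_rpow_of_nonneg _ _ (by positivity : (0:ℝ) ≤ 1/q),
              ← ENNReal.rpow_mul, hqq, ENNReal.rpow_one]
    -- assemble
    calc ENNReal.ofReal (t ^ (-(1/p0))) * (∫⁻ s in Set.Ioi (0:ℝ),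
          (ENNReal.ofReal (s ^ (1 / p0)) * rearr g s) ^ q / ENNReal.ofReal s) ^ (1/q)
        ≤ (ENNReal.ofReal B⁻¹) ^ (1/q) *
            (∑' k : ℕ, (ENNReal.ofReal ((B ^ k) ^ (1/p0)) *
              rearr f (B ^ (k+1) * t)) ^ q) ^ (1/q) := h2
      _ ≤ (ENNReal.ofReal B⁻¹) ^ (1/q) *
            (((1 - ENNReal.ofReal (B ^ (ε * q)))⁻¹) ^ (1/q) * T) := mul_le_mul_right h3 _
      _ = kap q0 B ε * T := by
          rw [kap, if_neg hqt, ← hqdef, ← mul_assoc,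
            ← ENNReal.mul_rpow_of_nonneg _ _ (by positivity : (0:ℝ) ≤ 1/q)]
lemma rho_zero (E : RIQBFS) : E.ρ (fun _ => (0:ℝ≥0∞)) = 0 :=
  (E.eq_zero_iff _).mpr (Filter.Eventually.of_forall fun _ => rfl)

lemma rho_finsum (E : RIQBFS) : ∀ (n : ℕ) (u : ℕ → ℝ → ℝ≥0∞),
    E.ρ (fun t => ∑ k ∈ Finset.range n, u k t) ≤
      ∑ k ∈ Finset.range n, (ENNReal.ofReal E.C) ^ (k+1) * E.ρ (u k) := by
  intro n
  induction n with
  | zero => intro u; simp [rho_zero E]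
  | succ n ih =>
    intro u
    have hsum : (fun t => ∑ k ∈ Finset.range (n+1), u k t) =
        fun t => u 0 t + ∑ k ∈ Finset.range n, u (k+1) t := by
      funext t
      rw [Finset.sum_range_succ' (fun k => u k t) n]
      ring
    rw [hsum]
    refine le_trans (E.quasi_triangle _ _) ?_
    rw [mul_add]
    have h2 := ih (fun k => u (k+1))
    calc ENNReal.ofReal E.C * E.ρ (u 0) +
          ENNReal.ofReal E.C * E.ρ (fun t => ∑ k ∈ Finset.range n, u (k+1) t)
        ≤ ENNReal.ofReal E.C * E.ρ (u 0) + ENNReal.ofReal E.C *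
            ∑ k ∈ Finset.range n, (ENNReal.ofReal E.C) ^ (k+1) * E.ρ (u (k+1)) :=
          add_le_add_right (mul_le_mul_right h2 _) _
      _ = ∑ k ∈ Finset.range (n+1), (ENNReal.ofReal E.C) ^ (k+1) * E.ρ (u k) := by
          rw [Finset.sum_range_succ' (fun k => (ENNReal.ofReal E.C) ^ (k+1) * E.ρ (u k)) n,
            Finset.mul_sum, add_comm]
          congr 1
          · apply Finset.sum_congr rfl
            intro k _
            rw [← mul_assoc, ← pow_succ']
          · rw [pow_one]

lemma rho_tsum (E : RIQBFS) (u : ℕ → ℝ → ℝ≥0∞) :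
    E.ρ (fun t => ∑' k, u k t) ≤ ∑' k, (ENNReal.ofReal E.C) ^ (k+1) * E.ρ (u k) := by
  have hmono : ∀ n, ∀ᵐ t ∂(volume.restrict (Set.Ioi (0:ℝ))),
      (∑ k ∈ Finset.range n, u k t) ≤ ∑ k ∈ Finset.range (n+1), u k t := fun n =>
    Filter.Eventually.of_forall fun t => by
      rw [Finset.sum_range_succ]; exact le_self_add
  have hlim : ∀ᵐ t ∂(volume.restrict (Set.Ioi (0:ℝ))),
      Filter.Tendsto (fun n => ∑ k ∈ Finset.range n, u k t) Filter.atTop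
        (nhds (∑' k, u k t)) :=
    Filter.Eventually.of_forall fun t => ENNReal.tendsto_nat_tsum _
  have hten := E.fatou (fun n t => ∑ k ∈ Finset.range n, u k t) (fun t => ∑' k, u k t)
    hmono hlim
  refine le_of_tendsto' hten fun n => ?_
  exact le_trans (rho_finsum E n u) (ENNReal.sum_le_tsum _)

lemma rho_dil (E : RIQBFS) {f : ℝ → ℝ} (hf : Measurable f) {a : ℝ} (ha : 0 < a)
    (hfin : E.ρ (rearr f) ≠ ⊤) :
    E.ρ (fun t => rearr f (a * t)) ≤ dilNorm E a * E.ρ (rearr f) := by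
  rcases eq_or_ne (E.ρ (rearr f)) 0 with h0 | h0
  · have hae : ∀ᵐ t ∂(volume.restrict (Set.Ioi (0:ℝ))), rearr f t = 0 :=
      (E.eq_zero_iff (rearr f)).mp h0
    have hzero : ∀ u : ℝ, 0 < u → rearr f u = 0 := by
      intro u hu
      have hex : ∃ u' : ℝ, u' ∈ Set.Ioo (0:ℝ) u ∧ rearr f u' = 0 := by
        by_contra hcon
        push_neg at hcon
        have hsub : Set.Ioo (0:ℝ) u ⊆ {t : ℝ | ¬ rearr f t = (fun _ => (0:ℝ≥0∞)) t} :=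
          fun x hx => hcon x hx
        have h1 : (volume.restrict (Set.Ioi (0:ℝ)))
            {t : ℝ | ¬ rearr f t = (fun _ => (0:ℝ≥0∞)) t} = 0 := hae
        have h2 : (volume.restrict (Set.Ioi (0:ℝ))) (Set.Ioo (0:ℝ) u) = 0 :=
          measure_mono_null hsub h1
        rw [Measure.restrict_apply measurableSet_Ioo,
          Set.inter_eq_left.mpr (fun x hx => hx.1), Real.volume_Ioo, sub_zero] at h2
        exact absurd h2 (by simp [hu])
      obtain ⟨u', hu', hz⟩ := hex
      exact le_antisymm (hz ▸ rearr_anti f hu'.2.le) zero_le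
    have hL : E.ρ (fun t => rearr f (a * t)) = 0 := by
      apply (E.eq_zero_iff _).mpr
      rw [Filter.EventuallyEq, ae_restrict_iff' measurableSet_Ioi]
      exact Filter.Eventually.of_forall fun t ht => hzero (a * t) (mul_pos ha ht)
    rw [hL]
    exact zero_le
  · set N := E.ρ (rearr f) with hN
    have hNtop : N ≠ ⊤ := hfin
    set c : ℝ := N.toReal with hc
    have hc0 : 0 < c := ENNReal.toReal_pos h0 hNtop
    have hoc : ENNReal.ofReal c = N := ENNReal.ofReal_toReal hNtop
    set f' : ℝ → ℝ := fun s => c⁻¹ * f s with hf'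
    have hm' : Measurable f' := hf.const_mul c⁻¹
    have hr' : ∀ u : ℝ, rearr f' u = ENNReal.ofReal c⁻¹ * rearr f u := fun u =>
      rearr_smul (inv_pos.mpr hc0) u
    have hcoe : ∀ x : ℝ, ENNReal.ofReal x = ((x.toNNReal : ℝ≥0) : ℝ≥0∞) := fun x => rfl
    have hNinv : ENNReal.ofReal c⁻¹ = N⁻¹ := by
      rw [ENNReal.ofReal_inv_of_pos hc0, hoc]
    have hnorm' : E.normE f' ≤ 1 := by
      rw [RIQBFS.normE]
      have heq : rearr f' = fun u => (((c⁻¹).toNNReal : ℝ≥0) : ℝ≥0∞) * rearr f u :=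
        funext fun u => by rw [hr' u, hcoe]
      rw [heq, E.smul_eq, ← hcoe, hNinv, ← hN]
      exact le_of_eq (ENNReal.inv_mul_cancel h0 hNtop)
    have hdil : E.normE (fun t => f' (a * t)) ≤ dilNorm E a :=
      le_iSup_of_le f' (le_iSup_of_le hm' (le_iSup_of_le hnorm' le_rfl))
    have hcomp : E.normE (fun t => f' (a * t)) =
        ENNReal.ofReal c⁻¹ * E.ρ (fun t => rearr f (a * t)) := by
      rw [RIQBFS.normE]
      have heq : rearr (fun t => f' (a * t)) =
          fun u => (((c⁻¹).toNNReal : ℝ≥0) : ℝ≥0∞) * rearr f (a * u) :=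
        funext fun u => by rw [rearr_dilation hm' ha u, hr' (a*u), hcoe]
      rw [heq, E.smul_eq, ← hcoe]
    have hkey : ENNReal.ofReal c⁻¹ * E.ρ (fun t => rearr f (a * t)) ≤ dilNorm E a := by
      rw [← hcomp]
      exact hdil
    calc E.ρ (fun t => rearr f (a * t))
        = N * (ENNReal.ofReal c⁻¹ * E.ρ (fun t => rearr f (a * t))) := by
          rw [← mul_assoc, hNinv, ENNReal.mul_inv_cancel h0 hNtop, one_mul]
      _ ≤ N * dilNorm E a := mul_le_mul_right hkey _
      _ = dilNorm E a * N := mul_comm _ _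

lemma boyd_extract {E : RIQBFS} {p0 : ℝ} (h : ENNReal.ofReal p0 < lowerBoyd E) :
    ∃ p' cB : ℝ, p0 < p' ∧ 0 < cB ∧ ∀ a : ℝ, 0 < a → a < 1 →
      dilNorm E a ≤ ENNReal.ofReal (cB * a ^ (-(1/p'))) := by
  rw [lowerBoyd, lt_sSup_iff] at h
  obtain ⟨b, hbmem, hlt⟩ := h
  obtain ⟨p', hp', rfl⟩ := hbmem
  obtain ⟨hp'0, cB, hcB, hbound⟩ := hp'
  exact ⟨p', cB, (ENNReal.ofReal_lt_ofReal_iff hp'0).mp hlt, hcB, hbound⟩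

/-- Let `E` be a r.i. quasi-Banach function space with lower Boyd index `p_E`, let
`0 < q₀ ≤ ∞` and `0 < p₀ < p_E`. Then `(L_{p₀,q₀}, L_∞)_{p₀,p₀;E} = E` with equivalent
quasi-norms: there exist `c, C > 0` such that for every `f ∈ L_{p₀,q₀} + L_∞`,
`c ρ_E(f^*) ≤ ρ_E(t ↦ t^{-1/p₀} K(t^{1/p₀}, f; L_{p₀,q₀}, L_∞)) ≤ C ρ_E(f^*)`. -/
theorem stmt11 (E : RIQBFS) (p0 : ℝ) (q0 : ℝ≥0∞) (hq0 : 0 < q0)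
    (hp0 : 0 < p0) (hp0E : ENNReal.ofReal p0 < lowerBoyd E) :
    ∃ c C : ℝ, 0 < c ∧ 0 < C ∧ ∀ f : ℝ → ℝ, Measurable f →
      lorentzKinf p0 q0 1 f < ⊤ →
      ENNReal.ofReal c * E.ρ (rearr f) ≤
          E.ρ (fun t => ENNReal.ofReal (t ^ (-(1 / p0))) *
            lorentzKinf p0 q0 (t ^ (1 / p0)) f) ∧
        E.ρ (fun t => ENNReal.ofReal (t ^ (-(1 / p0))) *
            lorentzKinf p0 q0 (t ^ (1 / p0)) f) ≤
          ENNReal.ofReal C * E.ρ (rearr f) := by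
  classical
  obtain ⟨p', cB, hp0p', hcB, hboyd⟩ := boyd_extract hp0E
  have hp'0 : 0 < p' := lt_trans hp0 hp0p'
  have hinv : 1/p' < 1/p0 := one_div_lt_one_div_of_lt hp0 hp0p'
  have hinv' : 0 < 1/p' := one_div_pos.mpr hp'0
  set ε : ℝ := (1/p0 - 1/p')/2 with hεdef
  have hε : 0 < ε := by rw [hεdef]; linarith
  have hεp : ε < 1/p0 := by rw [hεdef]; linarith
  have hεeq : (1/p0 - ε) - 1/p' = ε := by rw [hεdef]; ring
  have hEC : (0:ℝ) < E.C := lt_of_lt_of_le one_pos E.one_le_C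
  have h2C : (1:ℝ) < 2 * E.C := by linarith [E.one_le_C]
  set B : ℝ := min (1/2) ((2 * E.C) ^ (-(ε⁻¹))) with hBdef
  have hB0 : 0 < B := lt_min (by norm_num) (Real.rpow_pos_of_pos (by linarith) _)
  have hB1 : B < 1 := lt_of_le_of_lt (min_le_left _ _) (by norm_num)
  have hgeom : E.C * B ^ ε ≤ 1/2 := by
    have h1 : B ^ ε ≤ ((2 * E.C) ^ (-(ε⁻¹))) ^ ε :=
      Real.rpow_le_rpow hB0.le (min_le_right _ _) hε.le
    have h2 : ((2 * E.C) ^ (-(ε⁻¹))) ^ ε = (2 * E.C)⁻¹ := by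
      rw [← Real.rpow_mul (by linarith : (0:ℝ) ≤ 2 * E.C)]
      rw [show (-(ε⁻¹)) * ε = -1 from by field_simp]
      rw [Real.rpow_neg_one]
    rw [h2] at h1
    have h3 : E.C * B ^ ε ≤ E.C * (2 * E.C)⁻¹ := by
      apply mul_le_mul_of_nonneg_left h1 hEC.le
    calc E.C * B ^ ε ≤ E.C * (2 * E.C)⁻¹ := h3
      _ = 1/2 := by field_simp
  set κ : ℝ≥0∞ := kap q0 B ε with hκdef
  have hκtop : κ ≠ ⊤ := kap_ne_top hq0 hB0 hB1 hε
  -- geometric ratio bound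
  have hratio : ENNReal.ofReal E.C * ENNReal.ofReal (B ^ ε) ≤ ENNReal.ofReal (1/2) := by
    rw [← ENNReal.ofReal_mul hEC.le]
    exact ENNReal.ofReal_le_ofReal hgeom
  set G : ℝ≥0∞ := ENNReal.ofReal E.C * κ * ENNReal.ofReal cB *
    ENNReal.ofReal (B ^ (-(1/p'))) with hGdef
  have hGtop : G ≠ ⊤ := by
    rw [hGdef]
    exact ENNReal.mul_ne_top (ENNReal.mul_ne_top
      (ENNReal.mul_ne_top ENNReal.ofReal_ne_top hκtop) ENNReal.ofReal_ne_top)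
      ENNReal.ofReal_ne_top
  set Ctot : ℝ≥0∞ := ENNReal.ofReal E.C * (1 + 2 * G) with hCtotdef
  have hCtottop : Ctot ≠ ⊤ := by
    rw [hCtotdef]
    exact ENNReal.mul_ne_top ENNReal.ofReal_ne_top
      (by
        apply ENNReal.add_ne_top.mpr
        exact ⟨ENNReal.one_ne_top, ENNReal.mul_ne_top (by norm_num) hGtop⟩)
  refine ⟨clow p0 q0, Ctot.toReal + 1, clow_pos p0 q0,
    by positivity, fun f hf hfin => ?_⟩
  constructor
  · -- lower bound
    have hpt : ∀ t : ℝ, 0 < t →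
        ENNReal.ofReal (clow p0 q0) * rearr f t ≤
          ENNReal.ofReal (t ^ (-(1 / p0))) * lorentzKinf p0 q0 (t ^ (1 / p0)) f := by
      intro t ht
      have hτ : 0 < t ^ (1/p0) := Real.rpow_pos_of_pos ht _
      have hkl := kinf_lower hp0 hq0 f hτ
      have hpow : (t ^ (1/p0)) ^ p0 = t := by
        rw [← Real.rpow_mul ht.le, one_div_mul_cancel hp0.ne', Real.rpow_one]
      rw [hpow] at hkl
      have hX : ENNReal.ofReal (t ^ (-(1/p0))) * ENNReal.ofReal (t ^ (1/p0)) = 1 :=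
        ofReal_rpow_cancel ht _
      calc ENNReal.ofReal (clow p0 q0) * rearr f t
          = ENNReal.ofReal (t ^ (-(1/p0))) * (ENNReal.ofReal (clow p0 q0) *
              (ENNReal.ofReal (t ^ (1/p0)) * rearr f t)) := by
            calc ENNReal.ofReal (clow p0 q0) * rearr f t
                = ENNReal.ofReal (clow p0 q0) * (1 * rearr f t) := by rw [one_mul]
              _ = ENNReal.ofReal (clow p0 q0) *
                  ((ENNReal.ofReal (t ^ (-(1/p0))) * ENNReal.ofReal (t ^ (1/p0))) *
                    rearr f t) := by rw [hX]
              _ = _ := by ring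
        _ ≤ ENNReal.ofReal (t ^ (-(1/p0))) * lorentzKinf p0 q0 (t ^ (1/p0)) f :=
            mul_le_mul_right hkl _
    have hmono := E.mono
      (fun t => ENNReal.ofReal (t ^ (-(1 / p0))) * lorentzKinf p0 q0 (t ^ (1 / p0)) f)
      (fun t => ENNReal.ofReal (clow p0 q0) * rearr f t)
      (by
        rw [ae_restrict_iff' measurableSet_Ioi]
        exact Filter.Eventually.of_forall fun t ht => hpt t ht)
    have hcoe : ENNReal.ofReal (clow p0 q0) =
        (((clow p0 q0).toNNReal : ℝ≥0) : ℝ≥0∞) := rfl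
    calc ENNReal.ofReal (clow p0 q0) * E.ρ (rearr f)
        = E.ρ (fun t => ENNReal.ofReal (clow p0 q0) * rearr f t) := by
          rw [hcoe, ← E.smul_eq]
      _ ≤ _ := hmono
  · -- upper bound
    set N := E.ρ (rearr f) with hN
    rcases eq_or_ne N ⊤ with hNtop | hNtop
    · rw [hNtop, ENNReal.mul_top
        (ne_of_gt (ENNReal.ofReal_pos.mpr (by positivity)))]
      exact le_top
    -- finite case
    have hft : ∀ t : ℝ, 0 < t → rearr f t ≠ ⊤ := fun t ht =>
      (rearr_lt_top hp0 hq0 hfin ht).ne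
    set u : ℕ → ℝ → ℝ≥0∞ := fun k t =>
      κ * (ENNReal.ofReal ((B ^ k) ^ (1/p0 - ε)) * rearr f (B ^ (k+1) * t)) with hudef
    -- pointwise bound
    have hpt : ∀ t : ℝ, 0 < t →
        ENNReal.ofReal (t ^ (-(1 / p0))) * lorentzKinf p0 q0 (t ^ (1 / p0)) f ≤
          rearr f t + ∑' k, u k t := by
      intro t ht
      have hup := kinf_upper (p0 := p0) (q0 := q0) hf (hft t ht) (t ^ (1/p0))
      have htr := trunc_bound hp0 hq0 hε hεp hB0 hB1 ht f (gtr f (rearr f t).toReal)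
        (fun s hs => gtr_rearr_zero hf (hft t ht) hs)
        (fun s => gtr_rearr_le f ENNReal.toReal_nonneg s)
      have hX : ENNReal.ofReal (t ^ (-(1/p0))) * ENNReal.ofReal (t ^ (1/p0)) = 1 :=
        ofReal_rpow_cancel ht _
      calc ENNReal.ofReal (t ^ (-(1 / p0))) * lorentzKinf p0 q0 (t ^ (1 / p0)) f
          ≤ ENNReal.ofReal (t ^ (-(1 / p0))) *
              (lorentzNorm p0 q0 (gtr f (rearr f t).toReal) +
                ENNReal.ofReal (t ^ (1/p0)) * rearr f t) := mul_le_mul_right hup _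
        _ = ENNReal.ofReal (t ^ (-(1 / p0))) * lorentzNorm p0 q0 (gtr f (rearr f t).toReal)
              + rearr f t := by
            rw [mul_add, ← mul_assoc, hX, one_mul]
        _ ≤ (κ * ∑' k, ENNReal.ofReal ((B ^ k) ^ (1/p0 - ε)) * rearr f (B ^ (k+1) * t))
              + rearr f t := add_le_add_left htr _
        _ = rearr f t + ∑' k, u k t := by
            rw [hudef, ENNReal.tsum_mul_left, add_comm]
    -- ρ estimate
    have hstep1 : E.ρ (fun t => ENNReal.ofReal (t ^ (-(1 / p0))) *
        lorentzKinf p0 q0 (t ^ (1 / p0)) f) ≤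
        ENNReal.ofReal E.C * (N + E.ρ (fun t => ∑' k, u k t)) := by
      refine le_trans (E.mono (fun t => rearr f t + ∑' k, u k t) _
        (by
          rw [ae_restrict_iff' measurableSet_Ioi]
          exact Filter.Eventually.of_forall fun t ht => hpt t ht)) ?_
      exact E.quasi_triangle _ _
    -- bound each ρ (u k)
    have hterm : ∀ k : ℕ, (ENNReal.ofReal E.C) ^ (k+1) * E.ρ (u k) ≤
        G * (ENNReal.ofReal (1/2)) ^ k * N := by
      intro k
      have hBk : (0:ℝ) < B ^ k := pow_pos hB0 k
      have hBk1 : (0:ℝ) < B ^ (k+1) := pow_pos hB0 (k+1)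
      have hBk1lt : B ^ (k+1) < 1 := pow_lt_one₀ hB0.le hB1 (Nat.succ_ne_zero k)
      set w : ℝ≥0∞ := κ * ENNReal.ofReal ((B ^ k) ^ (1/p0 - ε)) with hwdef
      have hwtop : w ≠ ⊤ := ENNReal.mul_ne_top hκtop ENNReal.ofReal_ne_top
      have hu_eq : E.ρ (u k) = w * E.ρ (fun t => rearr f (B ^ (k+1) * t)) := by
        have heq : u k = fun t => ((w.toNNReal : ℝ≥0) : ℝ≥0∞) *
            rearr f (B ^ (k+1) * t) := by
          funext t
          rw [ENNReal.coe_toNNReal hwtop, hudef, hwdef, mul_assoc]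
        rw [heq, E.smul_eq, ENNReal.coe_toNNReal hwtop]
      have hdil := rho_dil E hf hBk1 hNtop
      have hb := hboyd (B ^ (k+1)) hBk1 hBk1lt
      calc (ENNReal.ofReal E.C) ^ (k+1) * E.ρ (u k)
          ≤ (ENNReal.ofReal E.C) ^ (k+1) * (w * (ENNReal.ofReal
              (cB * (B ^ (k+1)) ^ (-(1/p'))) * N)) := by
            rw [hu_eq]
            apply mul_le_mul_right
            apply mul_le_mul_right
            exact le_trans hdil (mul_le_mul_left hb _)
        _ = G * (ENNReal.ofReal E.C * ENNReal.ofReal (B ^ ε)) ^ k * N := by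
            have hexp1 : (B:ℝ) ^ (k+1) = B ^ k * B := pow_succ B k
            have hexp2 : ((B:ℝ) ^ k * B) ^ (-(1/p')) =
                (B ^ k) ^ (-(1/p')) * B ^ (-(1/p')) :=
              Real.mul_rpow hBk.le hB0.le
            have hexp3 : ((B:ℝ) ^ k) ^ (1/p0 - ε) * (B ^ k) ^ (-(1/p')) =
                (B ^ ε) ^ k := by
              rw [← Real.rpow_add hBk, show (1/p0 - ε) + (-(1/p')) = ε from by
                linarith [hεeq], pow_rpow_comm hB0 k ε]
            have e1 : ENNReal.ofReal (cB * (B ^ (k+1)) ^ (-(1/p'))) =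
                ENNReal.ofReal cB * (ENNReal.ofReal ((B ^ k) ^ (-(1/p'))) *
                  ENNReal.ofReal (B ^ (-(1/p')))) := by
              rw [hexp1, hexp2, ENNReal.ofReal_mul hcB.le,
                ENNReal.ofReal_mul (Real.rpow_nonneg hBk.le _)]
            have e2 : ENNReal.ofReal ((B ^ k) ^ (1/p0 - ε)) *
                ENNReal.ofReal ((B ^ k) ^ (-(1/p'))) =
                (ENNReal.ofReal (B ^ ε)) ^ k := by
              rw [← ENNReal.ofReal_mul (Real.rpow_nonneg hBk.le _), hexp3,
                ENNReal.ofReal_pow (Real.rpow_nonneg hB0.le _)]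
            rw [hwdef, pow_succ' (ENNReal.ofReal E.C) k, e1, mul_pow, ← e2, hGdef]
            ring
        _ ≤ G * (ENNReal.ofReal (1/2)) ^ k * N :=
            mul_le_mul_left (mul_le_mul_right (pow_le_pow_left' hratio k) G) N
    -- sum the series
    have hsum2 : (∑' k, (ENNReal.ofReal E.C) ^ (k+1) * E.ρ (u k)) ≤ 2 * G * N := by
      refine le_trans (ENNReal.tsum_le_tsum hterm) (le_of_eq ?_)
      have hhalf : ENNReal.ofReal (1/2 : ℝ) = 2⁻¹ := by
        rw [one_div, ENNReal.ofReal_inv_of_pos two_pos, ENNReal.ofReal_ofNat]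
      calc (∑' k, G * (ENNReal.ofReal (1/2)) ^ k * N)
          = G * N * ∑' k : ℕ, (ENNReal.ofReal (1/2)) ^ k := by
            rw [← ENNReal.tsum_mul_left]
            exact tsum_congr fun k => by ring
        _ = G * N * 2 := by
            rw [ENNReal.tsum_geometric, hhalf, ENNReal.one_sub_inv_two, inv_inv]
        _ = 2 * G * N := by ring
    -- final assembly
    have hfinal : E.ρ (fun t => ENNReal.ofReal (t ^ (-(1 / p0))) *
        lorentzKinf p0 q0 (t ^ (1 / p0)) f) ≤ Ctot * N := by
      refine le_trans hstep1 ?_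
      calc ENNReal.ofReal E.C * (N + E.ρ (fun t => ∑' k, u k t))
          ≤ ENNReal.ofReal E.C * (N + 2 * G * N) := by
            apply mul_le_mul_right
            exact add_le_add_right (le_trans (rho_tsum E u) hsum2) N
        _ = Ctot * N := by rw [hCtotdef]; ring
    refine le_trans hfinal (mul_le_mul_left ?_ N)
    calc Ctot = ENNReal.ofReal Ctot.toReal := (ENNReal.ofReal_toReal hCtottop).symm
      _ ≤ ENNReal.ofReal (Ctot.toReal + 1) := ENNReal.ofReal_le_ofReal (by linarith)
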